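/- For the two-particle system with one rotating scatterer, the angle γ/2 between the two reflection axes on the velocity circle satisfies cos(γ/2) = 1/(1+η). Precisely: for η > 0, the vectors u = (1, −(1+η), √η) and v = (−(1+η), 1, √η) in ℝ³ satisfy |⟪u, v⟫| / (‖u‖·‖v‖) = 1/(1+η), where ⟪·,·⟫ is the standard inner product and ‖·‖ the Euclidean norm. -/

import Mathlib

open RealInnerProductSpace

/-- For the two-particle system with one rotating scatterer, the angle `γ/2`
between the two reflection axes on the velocity circle satisfies
`cos (γ/2) = 1/(1+η)`. -/
theorem two_particle_angle (η : ℝ) (hη : 0 < η)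
    (u v : EuclideanSpace ℝ (Fin 3))
    (hu : u = ![1, -(1 + η), Real.sqrt η])
    (hv : v = ![-(1 + η), 1, Real.sqrt η]) :
    |⟪u, v⟫| / (‖u‖ * ‖v‖) = 1 / (1 + η) := by
  have hs : Real.sqrt η * Real.sqrt η = η := Real.mul_self_sqrt hη.le
  have hinner : ⟪u, v⟫ = -(η + 2) := by
    simp [PiLp.inner_apply, Fin.sum_univ_three, hs, hu, hv]
    ring
  have hX : (0:ℝ) ≤ (1 + η) * (η + 2) := by nlinarith
  have hnu : ‖u‖ = Real.sqrt ((1 + η) * (η + 2)) := by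
    rw [EuclideanSpace.norm_eq]
    congr 1
    simp [Fin.sum_univ_three, Real.sq_sqrt hη.le, hu]
    ring
  have hnv : ‖v‖ = Real.sqrt ((1 + η) * (η + 2)) := by
    rw [EuclideanSpace.norm_eq]
    congr 1
    simp [Fin.sum_univ_three, Real.sq_sqrt hη.le, hv]
    ring
  rw [hinner, hnu, hnv, abs_neg, Real.mul_self_sqrt hX,
    abs_of_nonneg (by linarith : (0:ℝ) ≤ η + 2)]
  rw [div_eq_div_iff (by nlinarith) (by linarith)]
  ring
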